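/- arXiv:1905.12449 — 4 statements merged into one kernel-verified Lean document; each statement's English description precedes it below -/
import Mathlib

section
/- For fixed real numbers a and b, the ratio Γ(n+a)/Γ(n+b) is asymptotically equivalent to n^{a-b} as n → ∞, i.e., lim_{n→∞} [Γ(n+a)/Γ(n+b)] / n^{a-b} = 1. -/
open Real Filter

/-- The key ratio. -/
noncomputable def wendelRatio (a : ℝ) (n : ℕ) : ℝ :=
  Real.Gamma ((n : ℝ) + a) / (Real.Gamma (n : ℝ) * (n : ℝ) ^ a)

lemma wendel_shift (a : ℝ) :
    ∀ᶠ n : ℕ in atTop, wendelRatio (a + 1) n = wendelRatio a n * (((n : ℝ) + a) / n) := by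
  filter_upwards [eventually_gt_atTop 0,
    (tendsto_natCast_atTop_atTop (R := ℝ)).eventually_gt_atTop (-a)] with n hn hna
  have hn' : (0 : ℝ) < n := by exact_mod_cast hn
  have hna' : (0 : ℝ) < (n : ℝ) + a := by linarith
  have h1 : (n : ℝ) + (a + 1) = ((n : ℝ) + a) + 1 := by ring
  rw [wendelRatio, wendelRatio, h1, Real.Gamma_add_one hna'.ne', Real.rpow_add hn',
    Real.rpow_one]
  field_simp

lemma wendel_hfrac (a : ℝ) :
    Filter.Tendsto (fun n : ℕ => ((n : ℝ) + a) / n) atTop (nhds 1) := by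
  have h1 : Tendsto (fun n : ℕ => (n : ℝ) / ((n : ℝ) + a)) atTop (nhds 1) :=
    tendsto_natCast_div_add_atTop a
  have h2 := h1.inv₀ one_ne_zero
  rw [inv_one] at h2
  refine h2.congr' ?_
  filter_upwards [eventually_gt_atTop 0,
    (tendsto_natCast_atTop_atTop (R := ℝ)).eventually_gt_atTop (-a)] with n hn hna
  have hn' : (0 : ℝ) < n := by exact_mod_cast hn
  rw [inv_div]

lemma wendel_succ {a : ℝ} (h : Filter.Tendsto (wendelRatio a) atTop (nhds 1)) :
    Filter.Tendsto (wendelRatio (a + 1)) atTop (nhds 1) := by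
  have := h.mul (wendel_hfrac a)
  rw [mul_one] at this
  exact this.congr' (EventuallyEq.symm (wendel_shift a))

lemma wendel_pred {a : ℝ} (h : Filter.Tendsto (wendelRatio (a + 1)) atTop (nhds 1)) :
    Filter.Tendsto (wendelRatio a) atTop (nhds 1) := by
  have := h.mul (tendsto_natCast_div_add_atTop (𝕜 := ℝ) a)
  rw [mul_one] at this
  refine this.congr' ?_
  filter_upwards [wendel_shift a, eventually_gt_atTop 0,
    (tendsto_natCast_atTop_atTop (R := ℝ)).eventually_gt_atTop (-a)] with n hs hn hna
  have hn' : (0 : ℝ) < n := by exact_mod_cast hn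
  have hna' : (0 : ℝ) < (n : ℝ) + a := by linarith
  rw [hs]
  field_simp

lemma wendel_base {a : ℝ} (ha : 0 < a) (ha1 : a ≤ 1) :
    Filter.Tendsto (wendelRatio a) atTop (nhds 1) := by
  rcases eq_or_lt_of_le ha1 with rfl | ha1
  · refine Tendsto.congr' ?_ tendsto_const_nhds
    filter_upwards [eventually_gt_atTop 0] with n hn
    have hn' : (0 : ℝ) < n := by exact_mod_cast hn
    rw [wendelRatio, Real.Gamma_add_one hn'.ne', Real.rpow_one]
    field_simp [(Real.Gamma_pos_of_pos hn').ne']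
  have hlow : Tendsto (fun n : ℕ => ((n : ℝ) / ((n : ℝ) + a)) ^ (1 - a)) atTop (nhds 1) := by
    have h1 : Tendsto (fun n : ℕ => (n : ℝ) / ((n : ℝ) + a)) atTop (nhds 1) :=
      tendsto_natCast_div_add_atTop a
    have := (Real.continuousAt_rpow_const 1 (1 - a) (Or.inl one_ne_zero)).tendsto.comp h1
    simpa [Function.comp_def] using this
  refine tendsto_of_tendsto_of_tendsto_of_le_of_le' hlow tendsto_const_nhds ?_ ?_
  · -- lower bound
    filter_upwards [eventually_gt_atTop 0] with n hn
    have hn' : (0 : ℝ) < n := by exact_mod_cast hn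
    have hna : (0 : ℝ) < (n : ℝ) + a := by linarith
    have hG : 0 < Real.Gamma (n : ℝ) := Real.Gamma_pos_of_pos hn'
    have hGa : 0 < Real.Gamma ((n : ℝ) + a) := Real.Gamma_pos_of_pos hna
    have key := Real.Gamma_mul_add_mul_le_rpow_Gamma_mul_rpow_Gamma
      (s := (n : ℝ) + a) (t := (n : ℝ) + a + 1) (a := a) (b := 1 - a)
      hna (by linarith) ha (by linarith) (by ring)
    have hcomb : a * ((n : ℝ) + a) + (1 - a) * ((n : ℝ) + a + 1) = (n : ℝ) + 1 := by ring
    rw [hcomb, Real.Gamma_add_one hna.ne', Real.Gamma_add_one hn'.ne'] at key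
    have hrw : Real.Gamma ((n:ℝ) + a) ^ a * (((n:ℝ) + a) * Real.Gamma ((n:ℝ)+a)) ^ (1 - a)
        = Real.Gamma ((n:ℝ) + a) * ((n:ℝ) + a) ^ (1 - a) := by
      rw [Real.mul_rpow hna.le hGa.le, mul_comm (((n:ℝ)+a) ^ (1-a)), ← mul_assoc,
        ← Real.rpow_add hGa]
      have : a + (1 - a) = 1 := by ring
      rw [this, Real.rpow_one]
    rw [hrw] at key
    rw [wendelRatio, Real.div_rpow hn'.le hna.le,
      div_le_div_iff₀ (by positivity) (by positivity)]
    calc (n:ℝ) ^ (1 - a) * (Real.Gamma (n:ℝ) * (n:ℝ) ^ a)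
        = (n:ℝ) * Real.Gamma (n:ℝ) := by
          rw [mul_comm (Real.Gamma _), ← mul_assoc, ← Real.rpow_add hn']
          have : 1 - a + a = 1 := by ring
          rw [this, Real.rpow_one]
      _ ≤ Real.Gamma ((n:ℝ)+a) * ((n:ℝ)+a) ^ (1-a) := key
  · -- upper bound
    filter_upwards [eventually_gt_atTop 0] with n hn
    have hn' : (0 : ℝ) < n := by exact_mod_cast hn
    have hG : 0 < Real.Gamma (n : ℝ) := Real.Gamma_pos_of_pos hn'
    have key := Real.Gamma_mul_add_mul_le_rpow_Gamma_mul_rpow_Gamma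
      (s := (n : ℝ)) (t := (n : ℝ) + 1) (a := 1 - a) (b := a)
      hn' (by linarith) (by linarith) ha (by ring)
    have hcomb : (1 - a) * (n : ℝ) + a * ((n : ℝ) + 1) = (n : ℝ) + a := by ring
    rw [hcomb, Real.Gamma_add_one hn'.ne'] at key
    have hrw : Real.Gamma (n:ℝ) ^ (1 - a) * ((n:ℝ) * Real.Gamma (n:ℝ)) ^ a
        = Real.Gamma (n:ℝ) * (n:ℝ) ^ a := by
      rw [Real.mul_rpow hn'.le hG.le, mul_comm ((n:ℝ) ^ a), ← mul_assoc,
        ← Real.rpow_add hG]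
      have : 1 - a + a = 1 := by ring
      rw [this, Real.rpow_one]
    rw [hrw] at key
    rw [wendelRatio, div_le_one (by positivity)]
    exact key

lemma wendel_int {c : ℝ} (hc : Filter.Tendsto (wendelRatio c) atTop (nhds 1)) :
    ∀ k : ℤ, Filter.Tendsto (wendelRatio (c + k)) atTop (nhds 1) := by
  intro k
  induction k using Int.induction_on with
  | zero => simpa using hc
  | succ k ih =>
    have := wendel_succ ih
    have harg : c + (k : ℤ) + 1 = c + ((k : ℤ) + 1 : ℤ) := by push_cast; ring
    rwa [harg] at this
  | pred k ih =>
    have harg : (c + (-(k : ℤ) - 1 : ℤ)) + 1 = c + (-(k : ℤ) : ℤ) := by push_cast; ring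
    refine wendel_pred ?_
    rwa [harg]

lemma wendel_all (a : ℝ) : Filter.Tendsto (wendelRatio a) atTop (nhds 1) := by
  rcases eq_or_ne (Int.fract a) 0 with h | h
  · have := wendel_int (wendel_base one_pos le_rfl) (⌊a⌋ - 1)
    have harg : (1 : ℝ) + ((⌊a⌋ - 1 : ℤ) : ℝ) = a := by
      have := Int.fract_add_floor a
      rw [h, zero_add] at this
      push_cast
      linarith
    rwa [harg] at this
  · have hf0 : 0 < Int.fract a := lt_of_le_of_ne (Int.fract_nonneg a) (Ne.symm h)
    have hf1 : Int.fract a < 1 := Int.fract_lt_one a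
    have := wendel_int (wendel_base hf0 hf1.le) ⌊a⌋
    rwa [Int.fract_add_floor a] at this

/-- `Γ(n+a)/Γ(n+b) ~ n^{a-b}` as `n → ∞`. -/
theorem stmt_4 (a b : ℝ) :
    Filter.Tendsto
      (fun n : ℕ => (Real.Gamma ((n : ℝ) + a) / Real.Gamma ((n : ℝ) + b)) / (n : ℝ) ^ (a - b))
      Filter.atTop (nhds 1) := by
  have h := (wendel_all a).div (wendel_all b) one_ne_zero
  rw [div_one] at h
  refine h.congr' ?_
  filter_upwards [eventually_gt_atTop 0,
    (tendsto_natCast_atTop_atTop (R := ℝ)).eventually_gt_atTop (-b)] with n hn hnb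
  have hn' : (0 : ℝ) < n := by exact_mod_cast hn
  have hnb' : (0 : ℝ) < (n : ℝ) + b := by linarith
  have hG : Real.Gamma (n : ℝ) ≠ 0 := (Real.Gamma_pos_of_pos hn').ne'
  have hGb : Real.Gamma ((n : ℝ) + b) ≠ 0 := (Real.Gamma_pos_of_pos hnb').ne'
  show wendelRatio a n / wendelRatio b n = _
  rw [wendelRatio, wendelRatio]
  rw [Real.rpow_sub hn']
  have hpa : (n : ℝ) ^ a ≠ 0 := (Real.rpow_pos_of_pos hn' a).ne'
  have hpb : (n : ℝ) ^ b ≠ 0 := (Real.rpow_pos_of_pos hn' b).ne'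
  field_simp
end

section
/- Let α₁ > 0, β > 0, β₁ > 0 and 0 < r < 1. Define x_{1,0} = (1−r)/(α₁ + β + 1) and x_{k,0} = ((k−1)α₁ + β₁)/(kα₁ + β + 1) · x_{k−1,0} for k > 1. Then x_{k,0} ~ C₀ · k^{−(1 + (β₂+1)/α₁)} as k → ∞, where β₂ = β − β₁ and C₀ = ((1−r)/α₁) · Γ(1 + (β+1)/α₁)/Γ(1 + β₁/α₁). -/
open Real Filter

private lemma gamma_prod (s : ℝ) (hs : 0 < s) (n : ℕ) :
    Real.Gamma (s + n + 1) = Real.Gamma s * ∏ j ∈ Finset.range (n + 1), (s + j) := by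
  induction n with
  | zero => simp [Real.Gamma_add_one hs.ne', mul_comm]
  | succ n ih =>
    have h : s + n + 1 ≠ 0 := by positivity
    rw [Finset.prod_range_succ, ← mul_assoc, ← ih,
      show s + ((n+1:ℕ):ℝ) + 1 = (s + n + 1) + 1 by push_cast; ring,
      Real.Gamma_add_one h]
    push_cast
    ring

private lemma gamma_ratio_lim (s : ℝ) (hs : 0 < s) :
    Tendsto (fun n : ℕ => (n : ℝ) ^ s * Real.Gamma (n + 1) / Real.Gamma ((n : ℝ) + 1 + s))
      atTop (nhds 1) := by
  have hG : Real.Gamma s ≠ 0 := (Real.Gamma_pos_of_pos hs).ne'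
  have h1 := (Real.GammaSeq_tendsto_Gamma s).mul_const (Real.Gamma s)⁻¹
  rw [mul_inv_cancel₀ hG] at h1
  refine h1.congr (fun n => ?_)
  have hprod : ∏ j ∈ Finset.range (n + 1), (s + (j:ℝ)) =
      Real.Gamma (s + n + 1) / Real.Gamma s := by
    rw [gamma_prod s hs n]; field_simp
  have hG2 : Real.Gamma (s + n + 1) ≠ 0 := by
    have : (0:ℝ) < s + n + 1 := by positivity
    exact (Real.Gamma_pos_of_pos this).ne'
  rw [Real.GammaSeq, hprod, Real.Gamma_nat_eq_factorial,
    show (n:ℝ) + 1 + s = s + n + 1 by ring]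
  field_simp

/-- Scale-free asymptotics for the boundary sequence `x_{k,0}`:
`x_{k,0} ~ C₀ · k^{-(1+(β₂+1)/α₁)}` where `β₂ = β - β₁`. -/
theorem stmt_7 (α₁ β β₁ r : ℝ) (hα₁ : 0 < α₁) (hβ : 0 < β) (hβ₁ : 0 < β₁)
    (hβ₂pos : 0 < β - β₁) (hr0 : 0 < r) (hr1 : r < 1)
    (x : ℕ → ℝ) (hx1 : x 1 = (1 - r) / (α₁ + β + 1))
    (hrec : ∀ k : ℕ, 1 < k →
      x k = (((k : ℝ) - 1) * α₁ + β₁) / ((k : ℝ) * α₁ + β + 1) * x (k - 1)) :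
    Filter.Tendsto (fun k : ℕ => x k * (k : ℝ) ^ (1 + ((β - β₁) + 1) / α₁)) Filter.atTop
      (nhds (((1 - r) / α₁) * (Real.Gamma (1 + (β + 1) / α₁) / Real.Gamma (1 + β₁ / α₁)))) := by
  set a : ℝ := β₁ / α₁ with ha_def
  set b : ℝ := (β + 1) / α₁ with hb_def
  set p : ℝ := 1 + ((β - β₁) + 1) / α₁ with hp_def
  have ha : 0 < a := by rw [ha_def]; positivity
  have hb : 0 < b := by rw [hb_def]; positivity
  have hαa : α₁ * a = β₁ := by rw [ha_def]; field_simp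
  have hαb : α₁ * b = β + 1 := by rw [hb_def]; field_simp
  have hpa : p + a = 1 + b := by
    rw [hp_def, ha_def, hb_def]; field_simp; ring
  have hΓa : 0 < Real.Gamma (1 + a) := Real.Gamma_pos_of_pos (by linarith)
  have hΓb : 0 < Real.Gamma (1 + b) := Real.Gamma_pos_of_pos (by linarith)
  set C : ℝ := (1 - r) / α₁ * (Real.Gamma (1 + b) / Real.Gamma (1 + a)) with hC_def
  clear_value C
  clear ha_def hb_def hp_def
  clear_value a b p
  -- closed form
  have key : ∀ k : ℕ, 1 ≤ k →
      x k = C * (Real.Gamma ((k:ℝ) + a) / Real.Gamma ((k:ℝ) + 1 + b)) := by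
    intro k hk
    induction k, hk using Nat.le_induction with
    | base =>
      have h2 : Real.Gamma ((1:ℝ) + 1 + b) = (1 + b) * Real.Gamma (1 + b) := by
        rw [show (1:ℝ) + 1 + b = (1 + b) + 1 by ring,
          Real.Gamma_add_one (by linarith)]
      have hden : α₁ + β + 1 = α₁ * (1 + b) := by
        rw [mul_add, mul_one, hαb]; ring
      push_cast
      rw [hx1, h2, hC_def, hden]
      have h1b : (0:ℝ) < 1 + b := by linarith
      field_simp
    | succ k hk ih =>
      have hk0 : (0:ℝ) ≤ (k:ℝ) := Nat.cast_nonneg k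
      have hr1' := hrec (k+1) (by omega)
      simp only [Nat.add_sub_cancel] at hr1'
      have hg1 : Real.Gamma ((k:ℝ) + 1 + a) = ((k:ℝ) + a) * Real.Gamma ((k:ℝ) + a) := by
        rw [show (k:ℝ) + 1 + a = ((k:ℝ) + a) + 1 by ring,
          Real.Gamma_add_one (by linarith)]
      have hg2 : Real.Gamma ((k:ℝ) + 1 + 1 + b) = ((k:ℝ) + 1 + b) * Real.Gamma ((k:ℝ) + 1 + b) := by
        rw [show (k:ℝ) + 1 + 1 + b = ((k:ℝ) + 1 + b) + 1 by ring,
          Real.Gamma_add_one (by linarith)]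
      have hΓ1 : (0:ℝ) < Real.Gamma ((k:ℝ) + a) := Real.Gamma_pos_of_pos (by linarith)
      have hΓ2 : (0:ℝ) < Real.Gamma ((k:ℝ) + 1 + b) := Real.Gamma_pos_of_pos (by linarith)
      have hnum : ((k:ℝ) + 1 - 1) * α₁ + β₁ = α₁ * ((k:ℝ) + a) := by
        rw [mul_add, hαa]; ring
      have hden : ((k:ℝ) + 1) * α₁ + β + 1 = α₁ * ((k:ℝ) + 1 + b) := by
        rw [mul_add, mul_add, hαb]; ring
      rw [hr1', ih]
      push_cast
      rw [hg1, hg2, hnum, hden]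
      have hkb : (0:ℝ) < (k:ℝ) + 1 + b := by linarith
      have hka : (0:ℝ) < (k:ℝ) + a := by linarith
      field_simp
  -- asymptotics pieces
  have hA := gamma_ratio_lim a ha
  have hB := gamma_ratio_lim b hb
  have hk1 : Tendsto (fun k : ℕ => (k:ℝ) / ((k:ℝ) + a)) atTop (nhds 1) := by
    have h0 : Tendsto (fun k : ℕ => ((k:ℝ) + a)⁻¹) atTop (nhds 0) :=
      (tendsto_atTop_add_const_right _ a tendsto_natCast_atTop_atTop).inv_tendsto_atTop
    have h1 : Tendsto (fun k : ℕ => 1 - a * ((k:ℝ) + a)⁻¹) atTop (nhds (1 - a * 0)) :=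
      tendsto_const_nhds.sub (tendsto_const_nhds.mul h0)
    rw [show (1:ℝ) - a * 0 = 1 by ring] at h1
    refine h1.congr (fun k => ?_)
    have hk0 : (0:ℝ) ≤ (k:ℝ) := Nat.cast_nonneg k
    have : (k:ℝ) + a ≠ 0 := by linarith
    field_simp
    ring
  have hT : Tendsto (fun k : ℕ =>
      C * (((k:ℝ) ^ b * Real.Gamma ((k:ℝ) + 1) / Real.Gamma ((k:ℝ) + 1 + b)) /
        ((k:ℝ) ^ a * Real.Gamma ((k:ℝ) + 1) / Real.Gamma ((k:ℝ) + 1 + a)) *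
        ((k:ℝ) / ((k:ℝ) + a)))) atTop (nhds (C * (1 / 1 * 1))) :=
    tendsto_const_nhds.mul ((hB.div hA one_ne_zero).mul hk1)
  have hlim : (C : ℝ) * (1 / 1 * 1) = C := by ring
  rw [hlim] at hT
  refine hT.congr' ?_
  filter_upwards [eventually_ge_atTop 1] with k hk
  have hkr : (1:ℝ) ≤ (k:ℝ) := by exact_mod_cast hk
  have hK0 : (0:ℝ) < (k:ℝ) := by linarith
  rw [key k hk]
  have hg1 : Real.Gamma ((k:ℝ) + 1 + a) = ((k:ℝ) + a) * Real.Gamma ((k:ℝ) + a) := by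
    rw [show (k:ℝ) + 1 + a = ((k:ℝ) + a) + 1 by ring, Real.Gamma_add_one (by linarith)]
  have hΓ1 : (0:ℝ) < Real.Gamma ((k:ℝ) + a) := Real.Gamma_pos_of_pos (by linarith)
  have hΓ2 : (0:ℝ) < Real.Gamma ((k:ℝ) + 1 + b) := Real.Gamma_pos_of_pos (by linarith)
  have hΓ3 : (0:ℝ) < Real.Gamma ((k:ℝ) + 1) := Real.Gamma_pos_of_pos (by linarith)
  have hKa : (0:ℝ) < (k:ℝ) ^ a := Real.rpow_pos_of_pos hK0 a
  have hKb : (0:ℝ) < (k:ℝ) ^ b := Real.rpow_pos_of_pos hK0 b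
  have hKp : (k:ℝ) ^ p = (k:ℝ) * (k:ℝ) ^ b / (k:ℝ) ^ a := by
    rw [eq_div_iff hKa.ne', ← Real.rpow_add hK0, hpa, Real.rpow_add hK0, Real.rpow_one]
  rw [hg1, hKp]
  have hka0 : (0:ℝ) < (k:ℝ) + a := by linarith
  field_simp
end

section
/- Let α₂ > 0 and let c, d be reals with c > d > 0 (so that the Gamma arguments below are positive). For positive integers l, define b_i^{(l)} = K · [Γ(l+d)/Γ(l+1+c)] · [Γ(i+c)/Γ(i+d)] for 1 ≤ i ≤ l, where K > 0 is a constant, and let y_i = Γ(i+d)/Γ(i+e) for a real e with e > d and e < c + 1. Then ∑_{i=1}^{l} b_i^{(l)} y_i ~ (K/(c−e+1)) · Γ(l+d)/Γ(l+e) as l → ∞. -/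
open Real Filter Finset

/-- Error-term decay: `Γ(l+e)/Γ(l+1+c) → 0` when `e < c+1`, `e > 0`. -/
lemma aux_gamma_ratio_tendsto_zero (c e : ℝ) (he : 0 < e) (hec : e < c + 1) :
    Filter.Tendsto (fun l : ℕ => Real.Gamma ((l : ℝ) + e) / Real.Gamma ((l : ℝ) + 1 + c))
      Filter.atTop (nhds 0) := by
  set s : ℝ := max (e - c) (1/2) with hs
  have hs0 : 0 < s := lt_of_lt_of_le (by norm_num) (le_max_right _ _)
  have hs1 : s < 1 := max_lt (by linarith) (by norm_num)
  have hes : e ≤ c + s := by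
    have := le_max_left (e - c) (1/2)
    linarith
  have hlim : Filter.Tendsto (fun l : ℕ => ((l : ℝ) + c) ^ (-(1 - s))) Filter.atTop (nhds 0) := by
    exact (tendsto_rpow_neg_atTop (by linarith)).comp
      (tendsto_atTop_add_const_right _ c tendsto_natCast_atTop_atTop)
  refine squeeze_zero' ?_ ?_ hlim
  · filter_upwards [Filter.eventually_ge_atTop 1] with l hl
    have h1 : (0:ℝ) < (l:ℝ) + e := by
      have : (1:ℝ) ≤ (l:ℝ) := by exact_mod_cast hl
      linarith
    have h2 : (0:ℝ) < (l:ℝ) + 1 + c := by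
      have : (1:ℝ) ≤ (l:ℝ) := by exact_mod_cast hl
      linarith
    exact div_nonneg (Real.Gamma_pos_of_pos h1).le (Real.Gamma_pos_of_pos h2).le
  · filter_upwards [Filter.eventually_ge_atTop 2] with l hl
    have hl2 : (2:ℝ) ≤ (l:ℝ) := by exact_mod_cast hl
    set x : ℝ := (l : ℝ) + c with hx
    have hx0 : 0 < x := by
      simp only [hx]; linarith
    have hΓx : 0 < Real.Gamma x := Real.Gamma_pos_of_pos hx0
    have hΓx1 : 0 < Real.Gamma (x + 1) := Real.Gamma_pos_of_pos (by linarith)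
    -- monotonicity step : Γ(l+e) ≤ Γ(x+s)
    have hmem1 : (l:ℝ) + e ∈ Set.Ici (2:ℝ) := by
      simp only [Set.mem_Ici]; linarith
    have hmem2 : x + s ∈ Set.Ici (2:ℝ) := by
      simp only [Set.mem_Ici, hx]
      have : e ≤ c + s := hes
      linarith
    have hmono : Real.Gamma ((l:ℝ) + e) ≤ Real.Gamma (x + s) :=
      Real.Gamma_strictMonoOn_Ici.monotoneOn hmem1 hmem2 (by simp only [hx]; linarith)
    -- log-convexity step : Γ(x+s) ≤ Γ(x)^(1-s) * Γ(x+1)^s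
    have hconv : Real.Gamma (x + s) ≤ Real.Gamma x ^ (1 - s) * Real.Gamma (x + 1) ^ s := by
      have := Real.Gamma_mul_add_mul_le_rpow_Gamma_mul_rpow_Gamma (s := x) (t := x + 1)
        (a := 1 - s) (b := s) hx0 (by linarith) (by linarith) hs0 (by ring)
      have harg : (1 - s) * x + s * (x + 1) = x + s := by ring
      rwa [harg] at this
    have hrw : (l:ℝ) + 1 + c = x + 1 := by simp only [hx]; ring
    rw [hrw]
    have hGamma1 : Real.Gamma (x + 1) = x * Real.Gamma x := Real.Gamma_add_one (ne_of_gt hx0)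
    calc Real.Gamma ((l:ℝ) + e) / Real.Gamma (x + 1)
        ≤ (Real.Gamma x ^ (1 - s) * Real.Gamma (x + 1) ^ s) / Real.Gamma (x + 1) :=
          (div_le_div_iff_of_pos_right hΓx1).mpr (hmono.trans hconv)
      _ = x ^ (-(1 - s)) := by
          have e1 : Real.Gamma x ^ (1 - s) * Real.Gamma x ^ s = Real.Gamma x := by
            rw [← Real.rpow_add hΓx]; norm_num
          have e2 : x ^ (-(1 - s)) = x ^ s / x := by
            rw [show -(1 - s) = s - 1 by ring, Real.rpow_sub hx0, Real.rpow_one]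
          rw [hGamma1, Real.mul_rpow hx0.le hΓx.le, e2,
            show Real.Gamma x ^ (1 - s) * (x ^ s * Real.Gamma x ^ s)
              = (Real.Gamma x ^ (1 - s) * Real.Gamma x ^ s) * x ^ s by ring, e1]
          rw [div_eq_div_iff (by positivity) (ne_of_gt hx0)]
          ring

/-- The key summation step: with `b_i^{(l)} = K·[Γ(l+d)/Γ(l+1+c)]·[Γ(i+c)/Γ(i+d)]`
and `y_i = Γ(i+d)/Γ(i+e)`, one has
`∑_{i=1}^{l} b_i^{(l)} y_i ~ (K/(c−e+1))·Γ(l+d)/Γ(l+e)` as `l → ∞`. -/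
theorem stmt_9 (c d e K : ℝ) (hd : 0 < d) (hcd : d < c) (hK : 0 < K)
    (hed : d < e) (hec : e < c + 1) :
    Filter.Tendsto
      (fun l : ℕ =>
        (∑ i ∈ Finset.Icc 1 l,
            (K * (Real.Gamma ((l : ℝ) + d) / Real.Gamma ((l : ℝ) + 1 + c))
              * (Real.Gamma ((i : ℝ) + c) / Real.Gamma ((i : ℝ) + d)))
            * (Real.Gamma ((i : ℝ) + d) / Real.Gamma ((i : ℝ) + e)))
          / ((K / (c - e + 1)) * (Real.Gamma ((l : ℝ) + d) / Real.Gamma ((l : ℝ) + e))))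
      Filter.atTop (nhds 1) := by
  have he : 0 < e := lt_trans hd hed
  have hc : 0 < c := lt_trans hd hcd
  have hce : 0 < c - e + 1 := by linarith
  set C : ℝ := Real.Gamma (1 + c) / Real.Gamma e with hC
  -- telescoping function
  set G : ℕ → ℝ := fun j => Real.Gamma ((j : ℝ) + 1 + c) / Real.Gamma ((j : ℝ) + e) with hG
  have key : ∀ l : ℕ, 1 ≤ l →
      (∑ i ∈ Finset.Icc 1 l,
            (K * (Real.Gamma ((l : ℝ) + d) / Real.Gamma ((l : ℝ) + 1 + c))
              * (Real.Gamma ((i : ℝ) + c) / Real.Gamma ((i : ℝ) + d)))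
            * (Real.Gamma ((i : ℝ) + d) / Real.Gamma ((i : ℝ) + e)))
          / ((K / (c - e + 1)) * (Real.Gamma ((l : ℝ) + d) / Real.Gamma ((l : ℝ) + e)))
      = 1 - C * (Real.Gamma ((l : ℝ) + e) / Real.Gamma ((l : ℝ) + 1 + c)) := by
    intro l hl
    have hl1 : (1:ℝ) ≤ (l:ℝ) := by exact_mod_cast hl
    -- step 1: simplify the summand and telescope
    have hsum : (∑ i ∈ Finset.Icc 1 l,
          (Real.Gamma ((i : ℝ) + c) / Real.Gamma ((i : ℝ) + d))
            * (Real.Gamma ((i : ℝ) + d) / Real.Gamma ((i : ℝ) + e)))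
        = (G l - G 0) / (c - e + 1) := by
      have h1 : ∀ i ∈ Finset.Icc 1 l,
          (Real.Gamma ((i : ℝ) + c) / Real.Gamma ((i : ℝ) + d))
            * (Real.Gamma ((i : ℝ) + d) / Real.Gamma ((i : ℝ) + e))
          = (G i - G (i - 1)) / (c - e + 1) := by
        intro i hi
        obtain ⟨hi1, _⟩ := Finset.mem_Icc.mp hi
        obtain ⟨j, rfl⟩ := Nat.exists_eq_add_of_le hi1
        have hj : (1 + j : ℕ) - 1 = j := by omega
        rw [hj]
        have hcast : ((1 + j : ℕ) : ℝ) = (j : ℝ) + 1 := by push_cast; ring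
        have hj0 : (0:ℝ) ≤ (j:ℝ) := Nat.cast_nonneg j
        have hd1 : 0 < (j:ℝ) + 1 + d := by linarith
        have he1 : 0 < (j:ℝ) + e := by linarith
        have he2 : 0 < (j:ℝ) + 1 + e := by linarith
        have hc1 : 0 < (j:ℝ) + 1 + c := by linarith
        have hΓd : Real.Gamma ((j:ℝ) + 1 + d) ≠ 0 := (Real.Gamma_pos_of_pos hd1).ne'
        have hΓe1 : Real.Gamma ((j:ℝ) + e) ≠ 0 := (Real.Gamma_pos_of_pos he1).ne'
        have hΓe2 : Real.Gamma ((j:ℝ) + 1 + e) ≠ 0 := (Real.Gamma_pos_of_pos he2).ne'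
        have hΓc1 : Real.Gamma ((j:ℝ) + 1 + c) ≠ 0 := (Real.Gamma_pos_of_pos hc1).ne'
        simp only [hG, hcast]
        -- Gamma recurrences
        have r1 : Real.Gamma ((j:ℝ) + 1 + 1 + c) = ((j:ℝ) + 1 + c) * Real.Gamma ((j:ℝ) + 1 + c) := by
          rw [show (j:ℝ) + 1 + 1 + c = ((j:ℝ) + 1 + c) + 1 by ring]
          exact Real.Gamma_add_one (ne_of_gt hc1)
        have r2 : Real.Gamma ((j:ℝ) + 1 + e) = ((j:ℝ) + e) * Real.Gamma ((j:ℝ) + e) := by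
          rw [show (j:ℝ) + 1 + e = ((j:ℝ) + e) + 1 by ring]
          exact Real.Gamma_add_one (ne_of_gt he1)
        rw [r1, r2]
        field_simp
        ring
      rw [Finset.sum_congr rfl h1]
      rw [← Finset.sum_div]
      congr 1
      -- telescope over Icc 1 l
      clear hl hl1
      induction l with
      | zero => simp
      | succ n ih =>
        rw [Finset.sum_Icc_succ_top (by omega),
          ih fun i hi => h1 i (Finset.Icc_subset_Icc_right (by omega) hi), Nat.add_sub_cancel]
        ring
    -- step 2: pull out constants
    have hfactor : (∑ i ∈ Finset.Icc 1 l,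
          (K * (Real.Gamma ((l : ℝ) + d) / Real.Gamma ((l : ℝ) + 1 + c))
            * (Real.Gamma ((i : ℝ) + c) / Real.Gamma ((i : ℝ) + d)))
          * (Real.Gamma ((i : ℝ) + d) / Real.Gamma ((i : ℝ) + e)))
        = K * (Real.Gamma ((l : ℝ) + d) / Real.Gamma ((l : ℝ) + 1 + c)) *
            ((G l - G 0) / (c - e + 1)) := by
      rw [← hsum, Finset.mul_sum]
      exact Finset.sum_congr rfl fun i _ => by ring
    rw [hfactor]
    have hd1 : 0 < (l:ℝ) + d := by linarith
    have he1 : 0 < (l:ℝ) + e := by linarith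
    have hc1 : 0 < (l:ℝ) + 1 + c := by linarith
    have hΓld : Real.Gamma ((l:ℝ) + d) ≠ 0 := (Real.Gamma_pos_of_pos hd1).ne'
    have hΓle : Real.Gamma ((l:ℝ) + e) ≠ 0 := (Real.Gamma_pos_of_pos he1).ne'
    have hΓlc : Real.Gamma ((l:ℝ) + 1 + c) ≠ 0 := (Real.Gamma_pos_of_pos hc1).ne'
    have hΓe : Real.Gamma e ≠ 0 := (Real.Gamma_pos_of_pos he).ne'
    have hG0 : G 0 = Real.Gamma (1 + c) / Real.Gamma e := by
      simp only [hG]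
      norm_num
    have hGl : G l = Real.Gamma ((l:ℝ) + 1 + c) / Real.Gamma ((l:ℝ) + e) := rfl
    rw [hGl, hG0, hC]
    field_simp
  -- conclude
  have hzero := aux_gamma_ratio_tendsto_zero c e he hec
  have hlim : Filter.Tendsto
      (fun l : ℕ => 1 - C * (Real.Gamma ((l : ℝ) + e) / Real.Gamma ((l : ℝ) + 1 + c)))
      Filter.atTop (nhds 1) := by
    have : Filter.Tendsto
        (fun l : ℕ => C * (Real.Gamma ((l : ℝ) + e) / Real.Gamma ((l : ℝ) + 1 + c)))
        Filter.atTop (nhds 0) := by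
      simpa using hzero.const_mul C
    simpa using (tendsto_const_nhds (x := (1:ℝ)) (f := Filter.atTop (α := ℕ))).sub this
  refine hlim.congr' ?_
  filter_upwards [Filter.eventually_ge_atTop 1] with l hl
  exact (key l hl).symm
end

section
/- Let (c_n) be defined by c_n = ∏_{i=1}^{n} (1 − γ/i − β/(i + ε_i))^{-1}, where γ, β > 0 are constants and ε_i = o(i^{1/2+ε}) is a real sequence with i + ε_i > 0 and each factor in (0,1). Then there exists a positive constant a such that c_n ~ a·n^{γ+β} as n → ∞, i.e., lim_{n→∞} c_n / n^{γ+β} exists and is a positive real number. -/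
open Real Filter Finset Asymptotics

private lemma aux_bound (γ β : ℝ) (hγ : 0 < γ) (hβ : 0 < β) (t e : ℝ) (ht1 : 1 ≤ t)
    (hεi : |e| ≤ 1/2 * t ^ ((3:ℝ)/4)) (hhi : (γ + 2*β)/t ≤ 1/2) (lq : ℝ)
    (hlq : lq = -Real.log (1 - γ/t - β/(t+e)) - (γ+β)/t) :
    |lq| ≤ (2*(γ+2*β)^2 + 2*β) * t ^ ((-5:ℝ)/4) := by
  have ht0 : (0:ℝ) < t := by linarith
  have hrt : t ^ ((3:ℝ)/4) ≤ t := by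
    calc t ^ ((3:ℝ)/4) ≤ t ^ (1:ℝ) := Real.rpow_le_rpow_of_exponent_le ht1 (by norm_num)
    _ = t := Real.rpow_one t
  have hrt0 : 0 ≤ t ^ ((3:ℝ)/4) := Real.rpow_nonneg ht0.le _
  have hεle : |e| ≤ t/2 := hεi.trans (by linarith)
  have hie : t/2 ≤ t + e := by have := abs_le.mp hεle; linarith [this.1]
  have hie0 : 0 < t + e := lt_of_lt_of_le (by linarith) hie
  obtain ⟨x, hxdef⟩ : ∃ x : ℝ, x = γ/t + β/(t+e) := ⟨_, rfl⟩
  have hx0 : 0 < x := hxdef ▸ add_pos (div_pos hγ ht0) (div_pos hβ hie0)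
  have hxle : x ≤ (γ + 2*β)/t := by
    have h1 : β/(t + e) ≤ β/(t/2) := div_le_div_of_nonneg_left hβ.le (by linarith) hie
    have h2 : β/(t/2) = 2*β/t := by field_simp
    rw [hxdef]
    rw [h2] at h1
    calc γ/t + β/(t+e) ≤ γ/t + 2*β/t := by linarith
    _ = (γ + 2*β)/t := by ring
  have hx2 : x ≤ 1/2 := hxle.trans hhi
  have habs : |x| < 1 := by rw [abs_of_pos hx0]; linarith
  have h1 : |x + Real.log (1-x)| ≤ |x|^2/(1-|x|) := by
    simpa using Real.abs_log_sub_add_sum_range_le habs 1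
  have hge0 : (0:ℝ) ≤ (γ+2*β)/t := by positivity
  have h1' : |x + Real.log (1-x)| ≤ 2 * ((γ+2*β)/t)^2 := by
    rw [abs_of_pos hx0] at h1
    have hd : x^2/(1-x) ≤ x^2/(1/2) :=
      div_le_div_of_nonneg_left (sq_nonneg x) (by norm_num) (by linarith)
    have hsq : x^2 ≤ ((γ+2*β)/t)^2 := sq_le_sq' (by linarith) hxle
    calc |x + Real.log (1-x)| ≤ x^2/(1-x) := h1
    _ ≤ x^2/(1/2) := hd
    _ = 2 * x^2 := by ring
    _ ≤ 2 * ((γ+2*β)/t)^2 := by linarith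
  have key : x - (γ+β)/t = β * (-e) / ((t + e)*t) := by
    rw [hxdef]; field_simp; ring
  have h2 : |x - (γ+β)/t| ≤ β * (t ^ ((3:ℝ)/4)) / ((t/2)*t) := by
    rw [key, abs_div, abs_mul, abs_neg, abs_of_pos hβ,
      abs_of_pos (mul_pos hie0 ht0)]
    apply div_le_div₀ (by positivity) ?_ (by positivity) ?_
    · nlinarith [abs_nonneg e]
    · nlinarith
  have harg : 1 - γ/t - β/(t+e) = 1 - x := by rw [hxdef]; ring
  have hLi : lq = -(x + Real.log (1-x)) + (x - (γ+β)/t) := by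
    rw [hlq, harg, hxdef]; ring
  have e0 : t ^ ((-2:ℝ)) = (t^2)⁻¹ := by
    rw [show ((-2:ℝ)) = -(2:ℝ) by norm_num, Real.rpow_neg ht0.le, Real.rpow_two]
  have hb1 : 2 * ((γ+2*β)/t)^2 ≤ 2*(γ+2*β)^2 * t ^ ((-5:ℝ)/4) := by
    have e1 : ((γ+2*β)/t)^2 = (γ+2*β)^2 * t^((-2:ℝ)) := by
      rw [e0, div_pow, div_eq_mul_inv]
    have e2 : t^((-2:ℝ)) ≤ t^((-5:ℝ)/4) :=
      Real.rpow_le_rpow_of_exponent_le ht1 (by norm_num)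
    rw [e1]
    nlinarith [sq_nonneg (γ+2*β)]
  have hb2 : β * (t ^ ((3:ℝ)/4)) / ((t/2)*t) = 2*β * t ^ ((-5:ℝ)/4) := by
    have e1 : t ^ ((3:ℝ)/4) / t^2 = t ^ ((-5:ℝ)/4) := by
      rw [← Real.rpow_two, ← Real.rpow_sub ht0]
      norm_num
    rw [← e1]
    obtain ⟨X, hX⟩ : ∃ X : ℝ, X = t ^ ((3:ℝ)/4) := ⟨_, rfl⟩
    rw [← hX]
    rw [show t/2*t = t^2/2 by ring, div_div_eq_mul_div]
    ring
  calc |lq| ≤ |x + Real.log (1-x)| + |x - (γ+β)/t| := by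
        rw [hLi]; exact (abs_add_le _ _).trans (by rw [abs_neg])
  _ ≤ 2*(γ+2*β)^2 * t ^ ((-5:ℝ)/4) + 2*β * t ^ ((-5:ℝ)/4) := by
        rw [← hb2]; exact add_le_add (h1'.trans hb1) h2
  _ = (2*(γ+2*β)^2 + 2*β) * t ^ ((-5:ℝ)/4) := by ring


/-- Asymptotics of the normalizing products `c_n = ∏_{i=1}^n (1 − γ/i − β/(i+ε_i))⁻¹`:
there is a positive constant `a` with `c_n ~ a·n^{γ+β}`. -/
theorem stmt_11 (γ β : ℝ) (hγ : 0 < γ) (hβ : 0 < β) (ε : ℕ → ℝ)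
    (hεpos : ∀ i : ℕ, 1 ≤ i → 0 < (i : ℝ) + ε i)
    (hfac : ∀ i : ℕ, 1 ≤ i →
      0 < 1 - γ / (i : ℝ) - β / ((i : ℝ) + ε i)
        ∧ 1 - γ / (i : ℝ) - β / ((i : ℝ) + ε i) < 1)
    (hε : ∀ δ : ℝ, 0 < δ →
      ε =o[Filter.atTop] fun i : ℕ => (i : ℝ) ^ ((1 : ℝ) / 2 + δ))
    (c : ℕ → ℝ)
    (hc : ∀ n : ℕ, c n = ∏ i ∈ Finset.Icc 1 n, (1 - γ / (i : ℝ) - β / ((i : ℝ) + ε i))⁻¹) :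
    ∃ a : ℝ, 0 < a ∧
      Filter.Tendsto (fun n : ℕ => c n / (n : ℝ) ^ (γ + β)) Filter.atTop (nhds a) := by
  set q : ℕ → ℝ := fun i => 1 - γ / (i : ℝ) - β / ((i : ℝ) + ε i) with hqdef
  set L : ℕ → ℝ := fun i => -Real.log (q i) - (γ + β) / (i : ℝ) with hLdef
  -- eventual smallness of ε
  have hsmall : ∀ᶠ i : ℕ in atTop, |ε i| ≤ 1/2 * (i : ℝ) ^ ((3:ℝ)/4) := by
    have h := (hε (1/4) (by norm_num)).bound (by norm_num : (0:ℝ) < 1/2)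
    filter_upwards [h] with i hi
    have h34 : (1:ℝ)/2 + 1/4 = 3/4 := by norm_num
    rw [h34] at hi
    simpa [Real.norm_eq_abs, abs_of_nonneg (Real.rpow_nonneg (Nat.cast_nonneg i) _)] using hi
  have hhalf : ∀ᶠ i : ℕ in atTop, (γ + 2*β) / (i : ℝ) ≤ 1/2 :=
    (tendsto_const_div_atTop_nhds_zero_nat (γ + 2*β)).eventually_le_const (by norm_num)
  -- summability of L
  have hsum : Summable L := by
    apply summable_of_isBigO_nat
      (Real.summable_nat_rpow.mpr (by norm_num : (-5/4 : ℝ) < -1))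
    rw [Asymptotics.isBigO_iff]
    refine ⟨2*(γ+2*β)^2 + 2*β, ?_⟩
    filter_upwards [hsmall, hhalf, eventually_ge_atTop 1] with i hεi hhi hi1
    have ht1 : (1:ℝ) ≤ (i : ℝ) := by exact_mod_cast hi1
    have hnn : (0:ℝ) < (i:ℝ) := by linarith
    have hb := aux_bound γ β hγ hβ ((i:ℝ)) (ε i) ht1 hεi hhi (L i) (by rw [hLdef])
    rw [Real.norm_eq_abs, Real.norm_eq_abs,
      abs_of_nonneg (Real.rpow_nonneg hnn.le _)]
    rw [show ((-5:ℝ)/4) = (-5/4 : ℝ) by norm_num] at hb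
    exact hb
  -- partial sums of L over Icc 1 n converge
  have hIcc : ∀ n : ℕ, ∑ i ∈ Finset.range (n+1), L i = L 0 + ∑ i ∈ Finset.Icc 1 n, L i := by
    intro n
    rw [Finset.range_eq_Ico, show Finset.Icc 1 n = Finset.Ico 1 (n+1) by
      rw [Finset.Ico_add_one_right_eq_Icc]]
    rw [← Finset.sum_Ico_consecutive L (Nat.zero_le 1) (Nat.le_add_left 1 n)]
    simp
  have hA : Tendsto (fun n : ℕ => ∑ i ∈ Finset.Icc 1 n, L i) atTop
      (nhds (∑' i, L i - L 0)) := by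
    have h0 : Tendsto (fun n : ℕ => ∑ i ∈ Finset.range (n+1), L i) atTop
        (nhds (∑' i, L i)) :=
      hsum.hasSum.tendsto_sum_nat.comp (tendsto_add_atTop_nat 1)
    have := h0.sub_const (L 0)
    apply this.congr
    intro n
    rw [hIcc n]; ring
  -- Euler–Mascheroni part
  have hEM : Tendsto (fun n : ℕ => (γ+β) * ((harmonic n : ℝ) - Real.log n)) atTop
      (nhds ((γ+β) * Real.eulerMascheroniConstant)) :=
    (Real.tendsto_harmonic_sub_log).const_mul (γ+β)
  have hg : Tendsto
      (fun n : ℕ => (∑ i ∈ Finset.Icc 1 n, L i) +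
        (γ+β) * ((harmonic n : ℝ) - Real.log n)) atTop
      (nhds ((∑' i, L i - L 0) + (γ+β) * Real.eulerMascheroniConstant)) :=
    hA.add hEM
  refine ⟨Real.exp ((∑' i, L i - L 0) + (γ+β) * Real.eulerMascheroniConstant),
    Real.exp_pos _, ?_⟩
  have hexp := (Real.continuous_exp.continuousAt.tendsto).comp hg
  apply hexp.congr'
  filter_upwards [eventually_ge_atTop 1] with n hn1
  have hn0 : 0 < (n : ℝ) := by exact_mod_cast hn1
  -- harmonic as Icc sum
  have hharm : (harmonic n : ℝ) = ∑ i ∈ Finset.Icc 1 n, ((i : ℝ))⁻¹ := by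
    rw [harmonic_eq_sum_Icc]
    push_cast
    rfl
  -- compute exp of the sum
  have hgval : (∑ i ∈ Finset.Icc 1 n, L i) + (γ+β) * ((harmonic n : ℝ) - Real.log n)
      = (∑ i ∈ Finset.Icc 1 n, (-Real.log (q i))) - (γ+β) * Real.log n := by
    have hsplit : ∑ i ∈ Finset.Icc 1 n, L i
        = (∑ i ∈ Finset.Icc 1 n, (-Real.log (q i)))
          - (γ+β) * ∑ i ∈ Finset.Icc 1 n, ((i:ℝ))⁻¹ := by
      rw [Finset.mul_sum, ← Finset.sum_sub_distrib]
      apply Finset.sum_congr rfl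
      intro i _
      simp only [hLdef]
      rw [div_eq_mul_inv]
    rw [hharm, hsplit]
    ring
  simp only [Function.comp_apply]
  rw [hgval, Real.exp_sub, Real.exp_sum]
  have hprod : ∏ i ∈ Finset.Icc 1 n, Real.exp (-Real.log (q i)) = c n := by
    rw [hc n]
    apply Finset.prod_congr rfl
    intro i hi
    have hi1 : 1 ≤ i := (Finset.mem_Icc.mp hi).1
    have hq0 : 0 < q i := (hfac i hi1).1
    rw [Real.exp_neg, Real.exp_log hq0]
  have hrpow : ((n:ℝ)) ^ (γ+β) = Real.exp ((γ+β) * Real.log n) := by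
    rw [Real.rpow_def_of_pos hn0, mul_comm]
  rw [hprod, ← hrpow]
end
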